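/- Let m ≥ 2 be such that L := log₂ m is a positive integer dividing m, let X = m/L, and let V = { v^[1], …, v^[X] } be the family of multi-unit valuations defined by v^[x](s) = 0 if s ≤ m − xL, and v^[x](s) = m·(x − x') + 2^{s − (m − x'L)} where x' is the unique integer in {1,…,x} with m − x'L < s ≤ m − (x'−1)L. Then: (1) for every quantity q ∈ {1,…,m} there exists x ∈ {1,…,X} with v^[x](q) ≥ 2 and v^[x](q) ≥ 2·v^[x](q−1); and (2) consequently, every set K ⊆ {0,…,m} with 0 ∈ K such that v^K(s) > (1/2)·v(s) for all v ∈ V and all s ∈ {0,…,m} must satisfy {1,…,m} ⊆ K. In particular, the domain V admits no sketch of fewer than m quantities achieving an approximation factor better than 1/2. -/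

import Mathlib

/-- The `x`-th valuation of the no-sketch domain: `v^[x](s) = 0` for
`s ≤ m − xL`, and otherwise `v^[x](s) = m(x − x') + 2^{s − (m − x'L)}`, where
`x' = ⌊(m−s)/L⌋ + 1` is the unique index with `m − x'L < s ≤ m − (x'−1)L`. -/
noncomputable def vX (m L x s : ℕ) : ℝ :=
  if s ≤ m - x * L then 0
  else
    (m : ℝ) * ((x : ℝ) - (((m - s) / L + 1 : ℕ) : ℝ)) +
      (2 : ℝ) ^ (s - (m - ((m - s) / L + 1) * L))

/-- Projection of a multi-unit valuation `v` onto a set of quantities `K`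
(containing `0`): `v^K(s) = max { v(x) : x ∈ K, x ≤ s }`. -/
noncomputable def proj (K : Finset ℕ) (v : ℕ → ℝ) (s : ℕ) : ℝ :=
  sSup (v '' {x | x ∈ K ∧ x ≤ s})

lemma vX_eq_zero {m L x s : ℕ} (h : s ≤ m - x * L) : vX m L x s = 0 := if_pos h

lemma vX_spec (m L x s : ℕ) (hL : 0 < L) (hx : x * L ≤ m)
    (hs : m - x * L < s) (hsm : s ≤ m) :
    ∃ a e : ℕ, (m - s) / L + 1 = a ∧ a ≤ x ∧ 1 ≤ a ∧ a * L ≤ m ∧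
      e + (m - a * L) = s ∧ 1 ≤ e ∧ e ≤ L ∧
      vX m L x s = (m : ℝ) * ((x : ℝ) - (a : ℝ)) + 2 ^ e := by
  have hms : m - s < x * L := by omega
  have hax : (m - s) / L < x := (Nat.div_lt_iff_lt_mul hL).2 hms
  refine ⟨(m - s) / L + 1, s - (m - ((m - s) / L + 1) * L), rfl, hax,
    Nat.le_add_left 1 _, ?_, ?_, ?_, ?_, ?_⟩
  all_goals
    have h1 := Nat.mod_add_div' (m - s) L
    have h2 := Nat.mod_lt (m - s) hL
    have h3 : ((m - s) / L + 1) * L = (m - s) / L * L + L := by ring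
  · calc ((m - s) / L + 1) * L ≤ x * L := Nat.mul_le_mul_right L (by omega)
    _ ≤ m := hx
  · have h4 : ((m - s) / L + 1) * L ≤ x * L := Nat.mul_le_mul_right L (by omega)
    rw [h3] at h4 ⊢; omega
  · have h4 : ((m - s) / L + 1) * L ≤ x * L := Nat.mul_le_mul_right L (by omega)
    rw [h3] at h4 ⊢; omega
  · have h4 : ((m - s) / L + 1) * L ≤ x * L := Nat.mul_le_mul_right L (by omega)
    rw [h3] at h4 ⊢; omega
  · rw [vX, if_neg (by omega)]

lemma vX_step (m L x s : ℕ) (hL : 0 < L) (hpow : 2 ^ L = m) (hx : x * L ≤ m)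
    (hs : s < m) : vX m L x s ≤ vX m L x (s + 1) := by
  by_cases h1 : s + 1 ≤ m - x * L
  · rw [vX_eq_zero h1, vX_eq_zero (le_trans (Nat.le_succ s) h1)]
  · by_cases h2 : s ≤ m - x * L
    · rw [vX_eq_zero h2]
      obtain ⟨a, e, ha, hax, -, -, -, -, -, hf⟩ :=
        vX_spec m L x (s + 1) hL hx (by omega) (by omega)
      rw [hf]
      have hc : (a : ℝ) ≤ x := by exact_mod_cast hax
      have hp : (0 : ℝ) < 2 ^ e := by positivity
      have hm0 : (0 : ℝ) ≤ (m : ℝ) * ((x : ℝ) - a) :=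
        mul_nonneg (Nat.cast_nonneg m) (by linarith)
      linarith
    · obtain ⟨a, e, ha, hax, ha1, haL, hes, he1, heL, hf⟩ :=
        vX_spec m L x s hL hx (by omega) (by omega)
      obtain ⟨b, f, hb, hbx, hb1, hbL, hfs, hf1, hfL, hg⟩ :=
        vX_spec m L x (s + 1) hL hx (by omega) (by omega)
      rw [hf, hg]
      rw [← Nat.sub_sub] at hb
      have hsucc := Nat.succ_div (a := m - s - 1) (b := L)
      have hms1 : m - s - 1 + 1 = m - s := by omega
      rw [hms1] at hsucc
      by_cases hd : L ∣ (m - s)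
      · rw [if_pos hd] at hsucc
        have hba : b + 1 = a := by omega
        have hmsb : (m - s) / L = b := by omega
        have hmul : b * L = m - s := by rw [← hmsb]; exact Nat.div_mul_cancel hd
        have haL' : a * L = (m - s) + L := by
          rw [← hba, Nat.succ_mul, hmul]
        have heL' : e = L := by omega
        have hf1' : f = 1 := by omega
        rw [heL', hf1']
        have hba' : (b : ℝ) = (a : ℝ) - 1 := by
          rw [← hba]; push_cast; ring
        rw [hba']
        have h2L : (2 : ℝ) ^ L = m := by exact_mod_cast hpow
        rw [h2L]
        have hexp : (m : ℝ) * ((x : ℝ) - ((a : ℝ) - 1)) =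
            (m : ℝ) * ((x : ℝ) - (a : ℝ)) + m := by ring
        rw [hexp]
        norm_num
      · rw [if_neg hd] at hsucc
        have hba : b = a := by omega
        subst hba
        have hfe : f = e + 1 := by omega
        rw [hfe]
        have : (2 : ℝ) ^ e ≤ 2 ^ (e + 1) :=
          pow_le_pow_right₀ one_le_two (Nat.le_succ e)
        linarith

lemma vX_mono (m L x : ℕ) (hL : 0 < L) (hpow : 2 ^ L = m) (hx : x * L ≤ m)
    (s t : ℕ) (hst : s ≤ t) (htm : t ≤ m) : vX m L x s ≤ vX m L x t := by
  induction t with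
  | zero => simp only [Nat.le_zero] at hst; rw [hst]
  | succ n ih =>
    rcases Nat.lt_or_ge s (n + 1) with h | h
    · exact le_trans (ih (by omega) (by omega)) (vX_step m L x n hL hpow hx (by omega))
    · have : s = n + 1 := by omega
      rw [this]

lemma part1 (m L q : ℕ) (hL : 0 < L) (hdvd : L ∣ m)
    (hq1 : 1 ≤ q) (hqm : q ≤ m) :
    ∃ x : ℕ, 1 ≤ x ∧ x ≤ m / L ∧ 2 ≤ vX m L x q ∧
      2 * vX m L x (q - 1) ≤ vX m L x q := by
  have hm1 : 1 ≤ m := le_trans hq1 hqm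
  have hxm : (m - q) / L + 1 ≤ m / L := by
    have h := Nat.div_lt_div_of_lt_of_dvd hdvd (show m - q < m by omega)
    omega
  refine ⟨(m - q) / L + 1, Nat.le_add_left 1 _, hxm, ?_⟩
  have hxLm : ((m - q) / L + 1) * L ≤ m := by
    calc ((m - q) / L + 1) * L ≤ m / L * L := Nat.mul_le_mul_right L hxm
    _ = m := Nat.div_mul_cancel hdvd
  have hlt : m - ((m - q) / L + 1) * L < q := by
    have h1 := Nat.mod_add_div' (m - q) L
    have h2 := Nat.mod_lt (m - q) hL
    have h3 : ((m - q) / L + 1) * L = (m - q) / L * L + L := by ring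
    rw [h3]; omega
  obtain ⟨a, e, ha, hax, ha1, haL, hes, he1, heL, hf⟩ :=
    vX_spec m L ((m - q) / L + 1) q hL hxLm hlt hqm
  have hax' : a = (m - q) / L + 1 := ha.symm
  subst hax'
  have hval : vX m L ((m - q) / L + 1) q = 2 ^ e := by
    rw [hf, sub_self, mul_zero, zero_add]
  have h2e : (2 : ℝ) ≤ 2 ^ e := by
    calc (2 : ℝ) = 2 ^ 1 := (pow_one 2).symm
    _ ≤ 2 ^ e := pow_le_pow_right₀ one_le_two he1
  refine ⟨by rw [hval]; exact h2e, ?_⟩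
  by_cases hq0 : q - 1 ≤ m - ((m - q) / L + 1) * L
  · rw [vX_eq_zero hq0, hval, mul_zero]
    positivity
  · obtain ⟨b, f, hb, hbx, hb1, hbL, hfs, hf1, hfL, hg⟩ :=
      vX_spec m L ((m - q) / L + 1) (q - 1) hL hxLm (by omega) (by omega)
    have hmq1 : m - (q - 1) = m - q + 1 := by omega
    rw [hmq1] at hb
    have hdiveq : (m - q + 1) / L = (m - q) / L := by
      apply Nat.div_eq_of_lt_le
      · calc (m - q) / L * L ≤ m - q := Nat.div_mul_le_self _ _
        _ ≤ m - q + 1 := Nat.le_succ _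
      · omega
    rw [hdiveq] at hb
    have hbx' : b = (m - q) / L + 1 := hb.symm
    subst hbx'
    have hferel : f + 1 = e := by omega
    rw [hg, sub_self, mul_zero, zero_add, hval, ← hferel, pow_succ]
    ring_nf
    linarith [pow_pos (show (0:ℝ) < 2 by norm_num) f]

/-- (1) for every quantity `q ∈ {1,…,m}` there is an `x` with
`v^[x](q) ≥ 2` and `v^[x](q) ≥ 2·v^[x](q−1)`; (2) consequently, every set of
quantities `K ∋ 0` whose projections satisfy `v^K(s) > (1/2)·v(s)` for all
valuations of the domain and all quantities must contain all of `{1,…,m}`;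
i.e., the domain admits no sketch with fewer than `m` quantities achieving an
approximation factor better than `1/2`. -/
theorem no_sketch_domain_needs_all_quantities
    (m L : ℕ) (hm : 2 ≤ m) (hL : 0 < L) (hpow : 2 ^ L = m) (hdvd : L ∣ m) :
    (∀ q : ℕ, 1 ≤ q → q ≤ m → ∃ x : ℕ, 1 ≤ x ∧ x ≤ m / L ∧
      2 ≤ vX m L x q ∧ 2 * vX m L x (q - 1) ≤ vX m L x q) ∧
    (∀ K : Finset ℕ, (∀ y ∈ K, y ≤ m) → 0 ∈ K →
      (∀ x : ℕ, 1 ≤ x → x ≤ m / L → ∀ s : ℕ, s ≤ m →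
        (1 / 2 : ℝ) * vX m L x s < proj K (vX m L x) s) →
      ∀ q : ℕ, 1 ≤ q → q ≤ m → q ∈ K) := by
  constructor
  · intro q hq1 hqm
    exact part1 m L q hL hdvd hq1 hqm
  · intro K hKm hK0 hproj q hq1 hqm
    obtain ⟨x, hx1, hxm, h2, hhalf⟩ := part1 m L q hL hdvd hq1 hqm
    have hxLm : x * L ≤ m := by
      calc x * L ≤ m / L * L := Nat.mul_le_mul_right L hxm
      _ = m := Nat.div_mul_cancel hdvd
    have hq := hproj x hx1 hxm q hqm
    have hfin : (vX m L x '' {y | y ∈ K ∧ y ≤ q}).Finite :=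
      Set.Finite.image _ (K.finite_toSet.subset (fun y hy => hy.1))
    have hne : (vX m L x '' {y | y ∈ K ∧ y ≤ q}).Nonempty :=
      ⟨vX m L x 0, Set.mem_image_of_mem _ ⟨hK0, Nat.zero_le q⟩⟩
    have hmem : sSup (vX m L x '' {y | y ∈ K ∧ y ≤ q}) ∈
        vX m L x '' {y | y ∈ K ∧ y ≤ q} := hne.csSup_mem hfin
    obtain ⟨y, ⟨hyK, hyq⟩, hyval⟩ := hmem
    have hproj_eq : proj K (vX m L x) q = sSup (vX m L x '' {y | y ∈ K ∧ y ≤ q}) := rfl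
    have hgt : vX m L x (q - 1) < vX m L x y := by
      rw [hyval, ← hproj_eq]
      calc vX m L x (q - 1) ≤ (1 / 2 : ℝ) * vX m L x q := by linarith
      _ < proj K (vX m L x) q := hq
    have hyeq : y = q := by
      by_contra hne'
      have hy' : y ≤ q - 1 := by omega
      have := vX_mono m L x hL hpow hxLm y (q - 1) hy' (by omega)
      linarith
    rw [← hyeq]; exact hyK
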